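/- For any ϱ > 0 there exists a constant γ = γ(θ, ϱ) > 0 such that for every integer d ≥ 2, every λ with |λ| > ϱ and dλ² ≤ 1, and every n ≥ 0: x_{n+1;θ} ≥ γ·x_{n;θ}. -/

import Mathlib

open Finset Filter

namespace Broadcast

/-- The root distribution `π = (θ/2, θ/2, (1-θ)/2, (1-θ)/2)`. -/
noncomputable def rootDist (θ : ℝ) (i : Fin 4) : ℝ :=
  if (i : ℕ) < 2 then θ / 2 else (1 - θ) / 2

/-- The transition matrix `P i j = λ · 1{i=j} + (1-λ) π_j`. -/
noncomputable def trans (θ lam : ℝ) (i j : Fin 4) : ℝ :=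
  (if i = j then lam else 0) + (1 - lam) * rootDist θ j

/-- Vertices at level `n` of the infinite rooted `d`-ary tree, encoded as paths. -/
abbrev Vtx (d n : ℕ) := Fin n → Fin d

/-- Configurations (assignments of states) on level `n`. -/
abbrev Config (d n : ℕ) := Vtx d n → Fin 4

/-- Restriction of a level-`(n+1)` configuration to the subtree of the `j`-th child
of the root. -/
def restrict {d n : ℕ} (j : Fin d) (A : Config d (n + 1)) : Config d n :=
  fun p => A (Fin.cons j p)

/-- `lik θ λ d n i A` is the probability of observing the configuration `A` on level `n`,
given that the root is in state `i` (the broadcasting process). -/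
noncomputable def lik (θ lam : ℝ) (d : ℕ) : (n : ℕ) → Fin 4 → Config d n → ℝ
  | 0, i, A => if A Fin.elim0 = i then 1 else 0
  | n + 1, i, A =>
      ∏ j : Fin d, ∑ k : Fin 4, trans θ lam i k * lik θ lam d n k (restrict j A)

/-- Unconditional probability of observing the configuration `A` on level `n`. -/
noncomputable def marg (θ lam : ℝ) (d n : ℕ) (A : Config d n) : ℝ :=
  ∑ i : Fin 4, rootDist θ i * lik θ lam d n i A

/-- The posterior `f_n(i, A) = P(σ_ρ = i ∣ σ(n) = A)`. -/
noncomputable def post (θ lam : ℝ) (d n : ℕ) (i : Fin 4) (A : Config d n) : ℝ :=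
  rootDist θ i * lik θ lam d n i A / marg θ lam d n A

/-- Expectation of `g(σ(n))` conditioned on the root being in state `r`,
i.e. `E g(σ^r(n))`. -/
noncomputable def condE (θ lam : ℝ) (d n : ℕ) (r : Fin 4) (g : Config d n → ℝ) : ℝ :=
  ∑ A : Config d n, lik θ lam d n r A * g A

/-- Unconditional expectation of `g(σ(n))`. -/
noncomputable def uncondE (θ lam : ℝ) (d n : ℕ) (g : Config d n → ℝ) : ℝ :=
  ∑ A : Config d n, marg θ lam d n A * g A

/-- `x_{n;θ} = E f_n(1, σ¹(n)) - θ/2`. -/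
noncomputable def xT (θ lam : ℝ) (d n : ℕ) : ℝ :=
  condE θ lam d n 0 (fun A => post θ lam d n 0 A) - θ / 2

/-- `y_{n;θ} = E f_n(2, σ¹(n)) - θ/2`. -/
noncomputable def yT (θ lam : ℝ) (d n : ℕ) : ℝ :=
  condE θ lam d n 0 (fun A => post θ lam d n 1 A) - θ / 2

/-- `z_{n;θ} = E f_n(1, σ³(n)) - θ/2`. -/
noncomputable def zT (θ lam : ℝ) (d n : ℕ) : ℝ :=
  condE θ lam d n 2 (fun A => post θ lam d n 0 A) - θ / 2

/-- `x_{n;1-θ} = E f_n(3, σ³(n)) - (1-θ)/2`. -/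
noncomputable def xH (θ lam : ℝ) (d n : ℕ) : ℝ :=
  condE θ lam d n 2 (fun A => post θ lam d n 2 A) - (1 - θ) / 2

/-- `y_{n;1-θ} = E f_n(4, σ³(n)) - (1-θ)/2`. -/
noncomputable def yH (θ lam : ℝ) (d n : ℕ) : ℝ :=
  condE θ lam d n 2 (fun A => post θ lam d n 3 A) - (1 - θ) / 2

/-- `z_{n;1-θ} = E f_n(3, σ¹(n)) - (1-θ)/2`. -/
noncomputable def zH (θ lam : ℝ) (d n : ℕ) : ℝ :=
  condE θ lam d n 0 (fun A => post θ lam d n 2 A) - (1 - θ) / 2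

/-- `u_{n;θ} = E (f_n(1, σ¹(n)) - θ/2)²`. -/
noncomputable def uT (θ lam : ℝ) (d n : ℕ) : ℝ :=
  condE θ lam d n 0 (fun A => (post θ lam d n 0 A - θ / 2) ^ 2)

/-- `v_{n;θ} = E (f_n(2, σ¹(n)) - θ/2)²`. -/
noncomputable def vT (θ lam : ℝ) (d n : ℕ) : ℝ :=
  condE θ lam d n 0 (fun A => (post θ lam d n 1 A - θ / 2) ^ 2)

/-- `w_{n;θ} = E (f_n(1, σ³(n)) - θ/2)²`. -/
noncomputable def wT (θ lam : ℝ) (d n : ℕ) : ℝ :=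
  condE θ lam d n 2 (fun A => (post θ lam d n 0 A - θ / 2) ^ 2)

/-- `w_{n;1-θ} = E (f_n(3, σ¹(n)) - (1-θ)/2)²`. -/
noncomputable def wH (θ lam : ℝ) (d n : ℕ) : ℝ :=
  condE θ lam d n 0 (fun A => (post θ lam d n 2 A - (1 - θ) / 2) ^ 2)

/-- `Y_{ij}(n) = f_n(i, σ_j(n+1))`, viewed as a function of the level-`(n+1)`
configuration. -/
noncomputable def Yf (θ lam : ℝ) (d n : ℕ) (i : Fin 4) (j : Fin d)
    (A : Config d (n + 1)) : ℝ :=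
  post θ lam d n i (restrict j A)

/-- `Z_i(n)`, viewed as a function of the level-`(n+1)` configuration. -/
noncomputable def Zf (θ lam : ℝ) (d n : ℕ) (i : Fin 4) (A : Config d (n + 1)) : ℝ :=
  if (i : ℕ) < 2 then
    ∏ j : Fin d, (1 + (2 * lam / θ) * (Yf θ lam d n i j A - θ / 2))
  else
    ∏ j : Fin d, (1 + (2 * lam / (1 - θ)) * (Yf θ lam d n i j A - (1 - θ) / 2))

/-- `S = (θ/2)Z₁ + (θ/2)Z₂ + ((1-θ)/2)Z₃ + ((1-θ)/2)Z₄`. -/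
noncomputable def Sf (θ lam : ℝ) (d n : ℕ) (A : Config d (n + 1)) : ℝ :=
  θ / 2 * Zf θ lam d n 0 A + θ / 2 * Zf θ lam d n 1 A
    + (1 - θ) / 2 * Zf θ lam d n 2 A + (1 - θ) / 2 * Zf θ lam d n 3 A

/-- Total variation distance between the laws of `σ^i(n)` and `σ^j(n)`. -/
noncomputable def dTV (θ lam : ℝ) (d n : ℕ) (i j : Fin 4) : ℝ :=
  (∑ A : Config d n, |lik θ lam d n i A - lik θ lam d n j A|) / 2

/-- The model is reconstructible if for some pair of root states the total variation
distance between the conditioned level-`n` configurations does not vanish. -/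
def Reconstructible (θ lam : ℝ) (d : ℕ) : Prop :=
  ∃ i j : Fin 4, 0 < Filter.limsup (fun n => dTV θ lam d n i j) Filter.atTop

/-- Probability that the root is in state `i` and the states at the vertices
`v 1, …, v k ∈ L(M)` are `c 1, …, c k`. -/
noncomputable def jointRootEvent (θ lam : ℝ) (d M k : ℕ) (v : Fin k → Vtx d M)
    (c : Fin k → Fin 4) (i : Fin 4) : ℝ :=
  ∑ A : Config d M,
    if ∀ t, A (v t) = c t then rootDist θ i * lik θ lam d M i A else 0

/-- Conditional probability `P(σ_ρ = i ∣ σ_{v t} = c t, 1 ≤ t ≤ k)`. -/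
noncomputable def condRoot (θ lam : ℝ) (d M k : ℕ) (v : Fin k → Vtx d M)
    (c : Fin k → Fin 4) (i : Fin 4) : ℝ :=
  jointRootEvent θ lam d M k v c i / ∑ i' : Fin 4, jointRootEvent θ lam d M k v c i'


/-! ### Auxiliary lemmas for `x_does_not_drop_fast` -/

lemma sum_rootDist (θ : ℝ) : ∑ i : Fin 4, rootDist θ i = 1 := by
  simp only [rootDist]
  rw [Fin.sum_univ_four]
  have h3 : ((3 : Fin 4) : ℕ) = 3 := rfl
  rw [h3]
  norm_num
  ring

lemma sum_trans (θ lam : ℝ) (i : Fin 4) : ∑ j : Fin 4, trans θ lam i j = 1 := by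
  simp only [trans, Finset.sum_add_distrib, ← Finset.mul_sum, sum_rootDist,
    Finset.sum_ite_eq, Finset.mem_univ, if_true]
  ring

lemma rootDist_pos {θ : ℝ} (hθ : θ ∈ Set.Ioo (0:ℝ) 1) (i : Fin 4) :
    0 < rootDist θ i := by
  obtain ⟨h1, h2⟩ := hθ
  unfold rootDist
  split <;> linarith

lemma rootDist_zero (θ : ℝ) : rootDist θ 0 = θ / 2 := by
  simp [rootDist]

lemma lik_nonneg {θ lam : ℝ} {d : ℕ} (hP : ∀ i j : Fin 4, 0 ≤ trans θ lam i j) :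
    ∀ (n : ℕ) (i : Fin 4) (A : Config d n), 0 ≤ lik θ lam d n i A := by
  intro n
  induction n with
  | zero => intro i A; simp only [lik]; split <;> norm_num
  | succ n ih =>
    intro i A
    simp only [lik]
    exact Finset.prod_nonneg fun j _ => Finset.sum_nonneg fun k _ =>
      mul_nonneg (hP i k) (ih k _)

lemma marg_nonneg {θ lam : ℝ} {d : ℕ} (hθ : θ ∈ Set.Ioo (0:ℝ) 1)
    (hP : ∀ i j : Fin 4, 0 ≤ trans θ lam i j) (n : ℕ) (A : Config d n) :
    0 ≤ marg θ lam d n A :=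
  Finset.sum_nonneg fun i _ => mul_nonneg (rootDist_pos hθ i).le (lik_nonneg hP n i A)

/-- The configurations at level `n+1` are `d`-tuples of configurations at level `n`. -/
def configEquiv (d n : ℕ) : Config d (n + 1) ≃ (Fin d → Config d n) where
  toFun A j := restrict j A
  invFun F p := F (p 0) (Fin.tail p)
  left_inv A := funext fun p => congrArg A (Fin.cons_self_tail p)
  right_inv F := funext fun j => funext fun p => by
    simp [restrict, Fin.tail_cons]

lemma restrict_configEquiv_symm {d n : ℕ} (F : Fin d → Config d n) (j : Fin d) :
    restrict j ((configEquiv d n).symm F) = F j := by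
  funext p
  simp [configEquiv, restrict, Fin.tail_cons]

lemma sum_fn_prod {ι X : Type*} [Fintype ι] [Fintype X] [DecidableEq ι]
    (h : ι → X → ℝ) :
    ∑ F : ι → X, ∏ j, h j (F j) = ∏ j, ∑ x, h j x := by
  rw [Finset.prod_univ_sum, Fintype.piFinset_univ]

lemma sum_lik {θ lam : ℝ} {d : ℕ} :
    ∀ (n : ℕ) (i : Fin 4), ∑ A : Config d n, lik θ lam d n i A = 1 := by
  intro n
  induction n with
  | zero =>
    intro i
    rw [← Equiv.sum_comp (Equiv.funUnique (Vtx d 0) (Fin 4)).symm]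
    simp only [lik, Equiv.funUnique_symm_apply]
    simp
    rw [Fin.sum_univ_four]; fin_cases i <;> simp
  | succ n ih =>
    intro i
    rw [← Equiv.sum_comp (configEquiv d n).symm]
    have h0 : ∀ F : Fin d → Config d n,
        lik θ lam d (n+1) i ((configEquiv d n).symm F)
          = ∏ j : Fin d, ∑ k : Fin 4, trans θ lam i k * lik θ lam d n k (F j) := by
      intro F
      simp only [lik, restrict_configEquiv_symm]
    simp only [h0]
    rw [sum_fn_prod (fun (_ : Fin d) (C : Config d n) =>
      ∑ k : Fin 4, trans θ lam i k * lik θ lam d n k C)]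
    have h1 : (∑ C : Config d n, ∑ k : Fin 4, trans θ lam i k * lik θ lam d n k C)
        = 1 := by
      rw [Finset.sum_comm]
      simp only [← Finset.mul_sum, ih, mul_one, sum_trans]
    simp only [h1, Finset.prod_const_one]

/-- Key pushforward lemma: a sum over level-`(n+1)` configurations of the likelihood
times a weight depending only on the restriction to one child subtree. -/
lemma sum_lik_succ {θ lam : ℝ} {d n : ℕ} (j₀ : Fin d) (i : Fin 4)
    (w : Config d n → ℝ) :
    ∑ A : Config d (n+1), lik θ lam d (n+1) i A * w (restrict j₀ A)
      = ∑ B : Config d n, (∑ k : Fin 4, trans θ lam i k * lik θ lam d n k B) * w B := by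
  rw [← Equiv.sum_comp (configEquiv d n).symm]
  have h0 : ∀ F : Fin d → Config d n,
      lik θ lam d (n+1) i ((configEquiv d n).symm F)
          * w (restrict j₀ ((configEquiv d n).symm F))
        = ∏ j : Fin d,
            ((∑ k : Fin 4, trans θ lam i k * lik θ lam d n k (F j)) *
              (if j = j₀ then w (F j) else 1)) := by
    intro F
    rw [Finset.prod_mul_distrib, Finset.prod_ite_eq']
    simp only [lik, restrict_configEquiv_symm, Finset.mem_univ, if_true]
  simp only [h0]
  rw [sum_fn_prod (fun (j : Fin d) (C : Config d n) =>
    (∑ k : Fin 4, trans θ lam i k * lik θ lam d n k C) * (if j = j₀ then w C else 1))]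
  rw [Finset.prod_eq_single j₀]
  · simp
  · intro j _ hj
    simp only [if_neg hj, mul_one]
    rw [Finset.sum_comm]
    simp only [← Finset.mul_sum, sum_lik, mul_one, sum_trans]
  · simp

lemma trans_mix {θ lam : ℝ} {d n : ℕ} (i : Fin 4) (B : Config d n) :
    ∑ k : Fin 4, trans θ lam i k * lik θ lam d n k B
      = lam * lik θ lam d n i B + (1 - lam) * marg θ lam d n B := by
  simp only [trans, add_mul, Finset.sum_add_distrib, ite_mul, zero_mul,
    Finset.sum_ite_eq, Finset.mem_univ, if_true, marg, Finset.mul_sum, mul_assoc]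

lemma sum_lik_succ' {θ lam : ℝ} {d n : ℕ} (j₀ : Fin d) (i : Fin 4)
    (w : Config d n → ℝ) :
    ∑ A : Config d (n+1), lik θ lam d (n+1) i A * w (restrict j₀ A)
      = lam * ∑ B : Config d n, lik θ lam d n i B * w B
        + (1 - lam) * ∑ B : Config d n, marg θ lam d n B * w B := by
  rw [sum_lik_succ]
  simp only [trans_mix, add_mul, Finset.sum_add_distrib, Finset.mul_sum, mul_assoc]

lemma post_mul_marg {θ lam : ℝ} {d : ℕ} (hθ : θ ∈ Set.Ioo (0:ℝ) 1)
    (hP : ∀ i j : Fin 4, 0 ≤ trans θ lam i j) (n : ℕ) (i : Fin 4) (A : Config d n) :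
    post θ lam d n i A * marg θ lam d n A = rootDist θ i * lik θ lam d n i A := by
  by_cases h : marg θ lam d n A = 0
  · have hz : rootDist θ i * lik θ lam d n i A = 0 := by
      have := (Finset.sum_eq_zero_iff_of_nonneg
        (fun k _ => mul_nonneg (rootDist_pos hθ k).le (lik_nonneg hP n k A))).mp h
      exact this i (Finset.mem_univ i)
    simp [h, hz]
  · rw [post, div_mul_cancel₀ _ h]

/-- The (unnormalized) variance of the posterior of state 1. -/
noncomputable def Vq (θ lam : ℝ) (d n : ℕ) : ℝ :=
  ∑ A : Config d n, marg θ lam d n A * (post θ lam d n 0 A - θ / 2) ^ 2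

lemma Vq_nonneg {θ lam : ℝ} {d : ℕ} (hθ : θ ∈ Set.Ioo (0:ℝ) 1)
    (hP : ∀ i j : Fin 4, 0 ≤ trans θ lam i j) (n : ℕ) : 0 ≤ Vq θ lam d n :=
  Finset.sum_nonneg fun A _ => mul_nonneg (marg_nonneg hθ hP n A) (sq_nonneg _)

lemma sum_marg {θ lam : ℝ} {d : ℕ} (n : ℕ) :
    ∑ A : Config d n, marg θ lam d n A = 1 := by
  unfold marg
  rw [Finset.sum_comm]
  simp only [← Finset.mul_sum, sum_lik, mul_one, sum_rootDist]

lemma sum_marg_post {θ lam : ℝ} {d : ℕ} (hθ : θ ∈ Set.Ioo (0:ℝ) 1)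
    (hP : ∀ i j : Fin 4, 0 ≤ trans θ lam i j) (n : ℕ) :
    ∑ A : Config d n, marg θ lam d n A * post θ lam d n 0 A = θ / 2 := by
  have h : ∀ A : Config d n, marg θ lam d n A * post θ lam d n 0 A
      = θ / 2 * lik θ lam d n 0 A := by
    intro A
    rw [mul_comm, post_mul_marg hθ hP, rootDist_zero]
  simp only [h, ← Finset.mul_sum, sum_lik, mul_one]

lemma sum_marg_w {θ lam : ℝ} {d : ℕ} (hθ : θ ∈ Set.Ioo (0:ℝ) 1)
    (hP : ∀ i j : Fin 4, 0 ≤ trans θ lam i j) (n : ℕ) :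
    ∑ B : Config d n, marg θ lam d n B * (post θ lam d n 0 B - θ / 2) = 0 := by
  simp only [mul_sub, Finset.sum_sub_distrib, sum_marg_post hθ hP, ← Finset.sum_mul,
    sum_marg, one_mul, sub_self]

lemma sum_lik0_w {θ lam : ℝ} {d : ℕ} (hθ : θ ∈ Set.Ioo (0:ℝ) 1)
    (hP : ∀ i j : Fin 4, 0 ≤ trans θ lam i j) (n : ℕ) :
    θ / 2 * ∑ B : Config d n, lik θ lam d n 0 B * (post θ lam d n 0 B - θ / 2)
      = Vq θ lam d n := by
  rw [Finset.mul_sum]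
  have h1 : ∀ B : Config d n,
      θ / 2 * (lik θ lam d n 0 B * (post θ lam d n 0 B - θ / 2))
        = marg θ lam d n B * post θ lam d n 0 B * (post θ lam d n 0 B - θ / 2) := by
    intro B
    rw [← mul_assoc, ← rootDist_zero θ, ← post_mul_marg hθ hP n 0 B]
    ring
  simp only [h1]
  have h2 : ∀ B : Config d n,
      marg θ lam d n B * post θ lam d n 0 B * (post θ lam d n 0 B - θ / 2)
        = marg θ lam d n B * (post θ lam d n 0 B - θ / 2) ^ 2
          + θ / 2 * (marg θ lam d n B * (post θ lam d n 0 B - θ / 2)) := by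
    intro B; ring
  simp only [h2, Finset.sum_add_distrib, ← Finset.mul_sum, sum_marg_w hθ hP, mul_zero,
    add_zero, Vq]

lemma Vq_eq_xT {θ lam : ℝ} {d : ℕ} (hθ : θ ∈ Set.Ioo (0:ℝ) 1)
    (hP : ∀ i j : Fin 4, 0 ≤ trans θ lam i j) (n : ℕ) :
    Vq θ lam d n = θ / 2 * xT θ lam d n := by
  rw [xT, condE, mul_sub, Finset.mul_sum]
  have h1 : ∀ A : Config d n,
      θ / 2 * (lik θ lam d n 0 A * post θ lam d n 0 A)
        = marg θ lam d n A * post θ lam d n 0 A * post θ lam d n 0 A := by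
    intro A
    rw [← mul_assoc, ← rootDist_zero θ, ← post_mul_marg hθ hP n 0 A]
    ring
  simp only [h1]
  have h2 : ∀ A : Config d n,
      marg θ lam d n A * (post θ lam d n 0 A - θ / 2) ^ 2
        = marg θ lam d n A * post θ lam d n 0 A * post θ lam d n 0 A
          - (θ / 2) * (marg θ lam d n A * post θ lam d n 0 A)
          - (θ / 2) * (marg θ lam d n A * (post θ lam d n 0 A - θ / 2)) := by
    intro A; ring
  rw [Vq]
  simp only [h2, Finset.sum_sub_distrib, ← Finset.mul_sum, sum_marg_w hθ hP,
    sum_marg_post hθ hP, mul_zero, sub_zero]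

/-- Pushforward of the marginal under restriction to one child subtree. -/
lemma marg_w_push {θ lam : ℝ} {d n : ℕ} (j₀ : Fin d) (w : Config d n → ℝ) :
    ∑ A : Config d (n+1), marg θ lam d (n+1) A * w (restrict j₀ A)
      = ∑ B : Config d n, marg θ lam d n B * w B := by
  have hswap : ∑ i : Fin 4, rootDist θ i * ∑ B : Config d n, lik θ lam d n i B * w B
      = ∑ B : Config d n, marg θ lam d n B * w B := by
    simp only [Finset.mul_sum]
    rw [Finset.sum_comm]
    simp only [marg, Finset.sum_mul, mul_assoc]
  calc ∑ A : Config d (n+1), marg θ lam d (n+1) A * w (restrict j₀ A)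
      = ∑ A : Config d (n+1), ∑ i : Fin 4,
          rootDist θ i * (lik θ lam d (n+1) i A * w (restrict j₀ A)) := by
        simp only [marg, Finset.sum_mul, mul_assoc]
    _ = ∑ i : Fin 4, ∑ A : Config d (n+1),
          rootDist θ i * (lik θ lam d (n+1) i A * w (restrict j₀ A)) := Finset.sum_comm
    _ = ∑ i : Fin 4, rootDist θ i *
          (lam * ∑ B : Config d n, lik θ lam d n i B * w B
            + (1 - lam) * ∑ B : Config d n, marg θ lam d n B * w B) := by
        refine Finset.sum_congr rfl fun i _ => ?_
        rw [← Finset.mul_sum, sum_lik_succ']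
    _ = lam * ∑ i : Fin 4, rootDist θ i * ∑ B : Config d n, lik θ lam d n i B * w B
          + (1 - lam) * (∑ B : Config d n, marg θ lam d n B * w B)
            * ∑ i : Fin 4, rootDist θ i := by
        rw [Finset.mul_sum, Finset.mul_sum, Finset.mul_sum, ← Finset.sum_add_distrib]
        exact Finset.sum_congr rfl fun i _ => by ring
    _ = ∑ B : Config d n, marg θ lam d n B * w B := by
        rw [hswap, sum_rootDist]
        ring

lemma push_zero {θ lam : ℝ} {d n : ℕ} (hθ : θ ∈ Set.Ioo (0:ℝ) 1)
    (hP : ∀ i j : Fin 4, 0 ≤ trans θ lam i j) (j₀ : Fin d) :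
    ∑ A : Config d (n+1),
      marg θ lam d (n+1) A * (post θ lam d n 0 (restrict j₀ A) - θ / 2) = 0 := by
  rw [marg_w_push j₀ (fun B => post θ lam d n 0 B - θ / 2), sum_marg_w hθ hP]

lemma push_sq {θ lam : ℝ} {d n : ℕ} (j₀ : Fin d) :
    ∑ A : Config d (n+1),
      marg θ lam d (n+1) A * (post θ lam d n 0 (restrict j₀ A) - θ / 2) ^ 2
      = Vq θ lam d n := by
  rw [marg_w_push j₀ (fun B => (post θ lam d n 0 B - θ / 2) ^ 2)]
  rfl

lemma push_cross {θ lam : ℝ} {d n : ℕ} (hθ : θ ∈ Set.Ioo (0:ℝ) 1)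
    (hP : ∀ i j : Fin 4, 0 ≤ trans θ lam i j) (j₀ : Fin d) :
    ∑ A : Config d (n+1), marg θ lam d (n+1) A * post θ lam d (n+1) 0 A
        * (post θ lam d n 0 (restrict j₀ A) - θ / 2)
      = lam * Vq θ lam d n := by
  have h1 : ∀ A : Config d (n+1),
      marg θ lam d (n+1) A * post θ lam d (n+1) 0 A
          * (post θ lam d n 0 (restrict j₀ A) - θ / 2)
        = θ / 2 * (lik θ lam d (n+1) 0 A
            * ((fun B => post θ lam d n 0 B - θ / 2) (restrict j₀ A))) := by
    intro A
    rw [mul_comm (marg θ lam d (n+1) A), post_mul_marg hθ hP, rootDist_zero]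
    ring
  simp only [h1]
  rw [← Finset.mul_sum, sum_lik_succ' j₀ 0 (fun B => post θ lam d n 0 B - θ / 2)]
  simp only [sum_marg_w hθ hP, mul_zero, add_zero]
  rw [← mul_assoc, mul_comm (θ / 2) lam, mul_assoc, sum_lik0_w hθ hP]

/-- One-step variance inequality: `V_{n+1} ≥ λ² V_n`. -/
lemma V_step {θ lam : ℝ} {d : ℕ} (hθ : θ ∈ Set.Ioo (0:ℝ) 1)
    (hP : ∀ i j : Fin 4, 0 ≤ trans θ lam i j) (hd : 0 < d) (n : ℕ) :
    lam ^ 2 * Vq θ lam d n ≤ Vq θ lam d (n+1) := by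
  set j₀ : Fin d := ⟨0, hd⟩
  have hm : ∀ A : Config d (n+1), 0 ≤ marg θ lam d (n+1) A := marg_nonneg hθ hP (n+1)
  have hcs := Finset.sum_mul_sq_le_sq_mul_sq Finset.univ
    (fun A : Config d (n+1) =>
      Real.sqrt (marg θ lam d (n+1) A) * (post θ lam d (n+1) 0 A - θ / 2))
    (fun A : Config d (n+1) =>
      Real.sqrt (marg θ lam d (n+1) A) * (post θ lam d n 0 (restrict j₀ A) - θ / 2))
  have e1 : ∑ A : Config d (n+1),
      (Real.sqrt (marg θ lam d (n+1) A) * (post θ lam d (n+1) 0 A - θ / 2))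
        * (Real.sqrt (marg θ lam d (n+1) A) * (post θ lam d n 0 (restrict j₀ A) - θ / 2))
      = lam * Vq θ lam d n := by
    have hpt : ∀ A : Config d (n+1),
        (Real.sqrt (marg θ lam d (n+1) A) * (post θ lam d (n+1) 0 A - θ / 2))
          * (Real.sqrt (marg θ lam d (n+1) A) * (post θ lam d n 0 (restrict j₀ A) - θ / 2))
        = marg θ lam d (n+1) A * post θ lam d (n+1) 0 A
            * (post θ lam d n 0 (restrict j₀ A) - θ / 2)
          - θ / 2 * (marg θ lam d (n+1) A * (post θ lam d n 0 (restrict j₀ A) - θ / 2)) := by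
      intro A
      rw [mul_mul_mul_comm, Real.mul_self_sqrt (hm A)]
      ring
    simp only [hpt, Finset.sum_sub_distrib, ← Finset.mul_sum]
    rw [push_cross hθ hP j₀, push_zero hθ hP j₀, mul_zero, sub_zero]
  have e2 : ∑ A : Config d (n+1),
      (Real.sqrt (marg θ lam d (n+1) A) * (post θ lam d (n+1) 0 A - θ / 2)) ^ 2
      = Vq θ lam d (n+1) := by
    have hpt : ∀ A : Config d (n+1),
        (Real.sqrt (marg θ lam d (n+1) A) * (post θ lam d (n+1) 0 A - θ / 2)) ^ 2
          = marg θ lam d (n+1) A * (post θ lam d (n+1) 0 A - θ / 2) ^ 2 := by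
      intro A
      rw [mul_pow, Real.sq_sqrt (hm A)]
    simp only [hpt]
    rfl
  have e3 : ∑ A : Config d (n+1),
      (Real.sqrt (marg θ lam d (n+1) A) * (post θ lam d n 0 (restrict j₀ A) - θ / 2)) ^ 2
      = Vq θ lam d n := by
    have hpt : ∀ A : Config d (n+1),
        (Real.sqrt (marg θ lam d (n+1) A) * (post θ lam d n 0 (restrict j₀ A) - θ / 2)) ^ 2
          = marg θ lam d (n+1) A * (post θ lam d n 0 (restrict j₀ A) - θ / 2) ^ 2 := by
      intro A
      rw [mul_pow, Real.sq_sqrt (hm A)]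
    simp only [hpt]
    exact push_sq j₀
  rw [e1, e2, e3] at hcs
  rcases (Vq_nonneg hθ hP n (d := d)).eq_or_lt with h | h
  · rw [← h, mul_zero]
    exact Vq_nonneg hθ hP (n+1)
  · nlinarith [hcs, h, Vq_nonneg hθ hP (n+1) (d := d)]

/-- For any `ϱ > 0` there is `γ = γ(θ, ϱ) > 0` with
`x_{n+1;θ} ≥ γ·x_{n;θ}` whenever `|λ| > ϱ` and `dλ² ≤ 1`. -/
theorem x_does_not_drop_fast (θ : ℝ) (hθ : θ ∈ Set.Ioo (0 : ℝ) 1)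
    (ϱ : ℝ) (hϱ : 0 < ϱ) :
    ∃ γ : ℝ, 0 < γ ∧ ∀ d : ℕ, 2 ≤ d → ∀ lam : ℝ,
      (∀ i j : Fin 4, 0 ≤ trans θ lam i j) → ϱ < |lam| → (d : ℝ) * lam ^ 2 ≤ 1 →
      ∀ n : ℕ, γ * xT θ lam d n ≤ xT θ lam d (n + 1) := by
  refine ⟨ϱ ^ 2, by positivity, ?_⟩
  intro d hd lam hP hϱlam _ n
  have hd0 : 0 < d := by omega
  have hV := V_step hθ hP hd0 n
  have hVn : 0 ≤ Vq θ lam d n := Vq_nonneg hθ hP n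
  have hrl : ϱ ^ 2 ≤ lam ^ 2 := by
    nlinarith [abs_nonneg lam, sq_abs lam, hϱlam, hϱ]
  have hkey : ϱ ^ 2 * Vq θ lam d n ≤ Vq θ lam d (n + 1) :=
    le_trans (by nlinarith) hV
  have hθ2 : 0 < θ / 2 := by
    have := hθ.1
    linarith
  rw [Vq_eq_xT hθ hP n, Vq_eq_xT hθ hP (n + 1)] at hkey
  have hkey' : θ / 2 * (ϱ ^ 2 * xT θ lam d n) ≤ θ / 2 * xT θ lam d (n + 1) := by
    calc θ / 2 * (ϱ ^ 2 * xT θ lam d n) = ϱ ^ 2 * (θ / 2 * xT θ lam d n) := by ring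
      _ ≤ θ / 2 * xT θ lam d (n + 1) := hkey
  exact le_of_mul_le_mul_left hkey' hθ2

end Broadcast
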